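/- The q-series identity 2(2πi)⁴ ∑_{k≥1} k² q^k / (1 - q^k)² = (π⁴/9)(E₄(τ) - E₂(τ)²) holds for τ in the upper half-plane, where q = e^{2πiτ} and E₂, E₄ are the normalized Eisenstein series of weights 2 and 4. -/

import Mathlib

open Complex Real

namespace QW


noncomputable def u (q : ℂ) (k : ℕ) : ℂ := q ^ k / (1 - q ^ k)

variable {q : ℂ}

lemma norm_pow_lt (hq : ‖q‖ < 1) (k : ℕ) : ‖q ^ (k + 1)‖ < 1 := by
  rw [norm_pow]
  exact pow_lt_one₀ (norm_nonneg q) hq (Nat.succ_ne_zero k)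

lemma one_sub_ne (hq : ‖q‖ < 1) (k : ℕ) : (1 : ℂ) - q ^ (k + 1) ≠ 0 := by
  intro h
  have h1 : q ^ (k+1) = 1 := by linear_combination -h
  have := norm_pow_lt hq k
  rw [h1] at this
  simp at this

lemma norm_one_sub_ge (hq : ‖q‖ < 1) (k : ℕ) : 1 - ‖q‖ ≤ ‖1 - q ^ (k + 1)‖ := by
  have h1 : ‖q ^ (k+1)‖ ≤ ‖q‖ := by
    rw [norm_pow]
    calc ‖q‖ ^ (k+1) ≤ ‖q‖ ^ 1 := pow_le_pow_of_le_one (norm_nonneg q) hq.le (by omega)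
    _ = ‖q‖ := pow_one _
  calc 1 - ‖q‖ ≤ 1 - ‖q ^ (k+1)‖ := by linarith
  _ = ‖(1:ℂ)‖ - ‖q ^ (k+1)‖ := by simp
  _ ≤ ‖1 - q ^ (k+1)‖ := norm_sub_norm_le _ _

lemma norm_u_le (hq : ‖q‖ < 1) (k : ℕ) :
    ‖u q (k + 1)‖ ≤ (1 - ‖q‖)⁻¹ * ‖q‖ ^ (k + 1) := by
  have hpos : (0:ℝ) < 1 - ‖q‖ := by linarith
  rw [u, norm_div, norm_pow, ← div_eq_inv_mul]
  gcongr
  exact norm_one_sub_ge hq k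

/-- `‖u q m‖ ≤ c * ‖q‖ ^ k` whenever `1 ≤ k ≤ m`. -/
lemma norm_u_le' (hq : ‖q‖ < 1) {k m : ℕ} (h1 : 1 ≤ k) (hkm : k ≤ m) :
    ‖u q m‖ ≤ (1 - ‖q‖)⁻¹ * ‖q‖ ^ k := by
  have hpos : (0:ℝ) < 1 - ‖q‖ := by linarith
  obtain ⟨m', rfl⟩ : ∃ m', m = m' + 1 := ⟨m - 1, by omega⟩
  calc ‖u q (m'+1)‖ ≤ (1 - ‖q‖)⁻¹ * ‖q‖ ^ (m'+1) := norm_u_le hq m'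
  _ ≤ (1 - ‖q‖)⁻¹ * ‖q‖ ^ k :=
      mul_le_mul_of_nonneg_left
        (pow_le_pow_of_le_one (norm_nonneg q) hq.le hkm) (by positivity)

lemma summable1 (hq : ‖q‖ < 1) (s : ℕ) :
    Summable fun k : ℕ => ((k : ℝ) + 1) ^ s * ‖q‖ ^ (k + 1) := by
  have h := summable_pow_mul_geometric_of_norm_lt_one (R := ℝ) s
    (r := ‖q‖) (by rwa [Real.norm_eq_abs, _root_.abs_of_nonneg (norm_nonneg q)])
  have h2 := h.comp_injective (add_left_injective 1)
  refine h2.congr fun k => ?_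
  simp only [Function.comp_apply]
  push_cast
  ring

/-- Master two-dimensional summability criterion. -/
lemma summable_grid (hq : ‖q‖ < 1) (C : ℝ) {F : ℕ × ℕ → ℂ}
    (hF : ∀ p : ℕ × ℕ, ‖F p‖ ≤
      C * (((p.1 : ℝ) + 1) ^ 3 * ‖q‖ ^ (p.1 + 1)) * (((p.2 : ℝ) + 1) ^ 3 * ‖q‖ ^ (p.2 + 1))) :
    Summable fun p => ‖F p‖ := by
  have hM : Summable fun p : ℕ × ℕ =>
      C * (((p.1 : ℝ) + 1) ^ 3 * ‖q‖ ^ (p.1 + 1)) * (((p.2 : ℝ) + 1) ^ 3 * ‖q‖ ^ (p.2 + 1)) := by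
    have := ((summable1 hq 3).mul_of_nonneg (summable1 hq 3)
      (fun k => by positivity) (fun k => by positivity)).mul_left C
    exact this.congr fun p => by ring
  exact Summable.of_nonneg_of_le (fun p => norm_nonneg _) hF hM

lemma summable_grid' (hq : ‖q‖ < 1) (C : ℝ) {F : ℕ × ℕ → ℂ}
    (hF : ∀ p : ℕ × ℕ, ‖F p‖ ≤
      C * (((p.1 : ℝ) + 1) ^ 3 * ‖q‖ ^ (p.1 + 1)) * (((p.2 : ℝ) + 1) ^ 3 * ‖q‖ ^ (p.2 + 1))) :
    Summable F :=
  Summable.of_norm (summable_grid hq C hF)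



/-- Group a summable series over `ℕ × ℕ` along the fibers of `g`,
where the fiber of `n` is given by the finset `s n`. -/
lemma tsum_group {F : ℕ × ℕ → ℂ} (hF : Summable F) (g : ℕ × ℕ → ℕ)
    (s : ℕ → Finset (ℕ × ℕ)) (hs : ∀ p n, p ∈ s n ↔ g p = n) :
    HasSum (fun n => ∑ p ∈ s n, F p) (∑' p, F p) := by
  have ha : HasSum (F ∘ (Equiv.sigmaFiberEquiv g)) (∑' p, F p) :=
    (Equiv.hasSum_iff _).2 hF.hasSum
  refine HasSum.sigma ha fun n => ?_
  -- goal : HasSum (fun c : {x // g x = n} => F ↑c) (∑ p ∈ s n, F p)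
  let e : (s n : Finset (ℕ × ℕ)) ≃ {x // g x = n} :=
    { toFun := fun x => ⟨x.1, (hs x.1 n).1 x.2⟩
      invFun := fun x => ⟨x.1, (hs x.1 n).2 x.2⟩
      left_inv := fun x => rfl
      right_inv := fun x => rfl }
  have h1 : HasSum (fun x : (s n : Finset (ℕ × ℕ)) => F x.1) (∑ p ∈ s n, F p) := by
    have := hasSum_fintype (fun x : (s n : Finset (ℕ × ℕ)) => F x.1)
    rwa [Finset.sum_coe_sort] at this
  have h2 : (fun c : {x // g x = n} => F c.1) ∘ e = fun x : (s n : Finset (ℕ × ℕ)) => F x.1 := funext fun x => rfl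
  exact (Equiv.hasSum_iff e (f := fun c : {x // g x = n} => F c.1)).1 (h2 ▸ h1)

/-- Additive fibers: grouping along `p.1 + p.2`. -/
lemma tsum_antidiag {F : ℕ × ℕ → ℂ} (hF : Summable F) :
    HasSum (fun n => ∑ k ∈ Finset.range (n + 1), F (k, n - k)) (∑' p, F p) := by
  have h := tsum_group hF (fun p => p.1 + p.2) (fun n => Finset.HasAntidiagonal.antidiagonal n)
    (fun p n => Finset.HasAntidiagonal.mem_antidiagonal)
  refine h.congr_fun fun n => ?_
  exact (Finset.Nat.sum_antidiagonal_eq_sum_range_succ_mk _ n).symm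

/-- Multiplicative fibers: grouping along `(p.1+1) * (p.2+1)`. -/
lemma tsum_divisors {F : ℕ × ℕ → ℂ} (hF : Summable F) :
    HasSum (fun n => ∑ x ∈ Nat.divisorsAntidiagonal n, F (x.1 - 1, x.2 - 1)) (∑' p, F p) := by
  have key : ∀ n, ∀ p ∈ Nat.divisorsAntidiagonal n, 1 ≤ p.1 ∧ 1 ≤ p.2 := by
    intro n p hp
    rw [Nat.mem_divisorsAntidiagonal] at hp
    rcases hp with ⟨h1, h2⟩
    constructor <;> by_contra h <;> push_neg at h
    · have : p.1 = 0 := by omega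
      rw [this] at h1; simp at h1; omega
    · have : p.2 = 0 := by omega
      rw [this] at h1; simp at h1; omega
  have h := tsum_group hF (fun p => (p.1 + 1) * (p.2 + 1))
    (fun n => (Nat.divisorsAntidiagonal n).image (fun x => (x.1 - 1, x.2 - 1))) ?_
  · refine h.congr_fun fun n => ?_
    rw [Finset.sum_image]
    intro x hx y hy hxy
    have hx' := key n x hx
    have hy' := key n y hy
    have h1 : x.1 = y.1 ∧ x.2 = y.2 := by
      have e1 : x.1 - 1 = y.1 - 1 := congrArg Prod.fst hxy
      have e2 : x.2 - 1 = y.2 - 1 := congrArg Prod.snd hxy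
      omega
    exact Prod.ext h1.1 h1.2
  · intro p n
    simp only [Finset.mem_image]
    constructor
    · rintro ⟨x, hx, rfl⟩
      have h1 := key n x hx
      rw [Nat.mem_divisorsAntidiagonal] at hx
      have : x.1 - 1 + 1 = x.1 ∧ x.2 - 1 + 1 = x.2 := by omega
      rw [this.1, this.2]
      exact hx.1
    · rintro h
      refine ⟨(p.1 + 1, p.2 + 1), ?_, by simp⟩
      rw [Nat.mem_divisorsAntidiagonal]
      refine ⟨h, ?_⟩
      rw [← h]
      exact Nat.mul_ne_zero (Nat.succ_ne_zero _) (Nat.succ_ne_zero _)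



/-- Split a double series into (strict) upper triangle, (strict) lower triangle
and diagonal. -/
lemma split3 {F : ℕ × ℕ → ℂ} (hn : Summable fun p => ‖F p‖) :
    ∑' p, F p = (∑' p : ℕ × ℕ, F (p.1, p.2 + p.1 + 1)) +
      (∑' p : ℕ × ℕ, F (p.2 + p.1 + 1, p.1)) + ∑' j : ℕ, F (j, j) := by
  classical
  have hF : Summable F := hn.of_norm
  have hup : Summable fun p : ℕ × ℕ => F (p.1, p.2 + p.1 + 1) := by
    have : Function.Injective (fun p : ℕ × ℕ => (p.1, p.2 + p.1 + 1)) := by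
      intro a b h
      have h1 := congrArg Prod.fst h
      have h2 := congrArg Prod.snd h
      simp only at h1 h2
      exact Prod.ext h1 (by omega)
    exact hF.comp_injective this
  have hdiag : Summable fun j : ℕ => F (j, j) :=
    hF.comp_injective (fun a b h => by
      have := congrArg Prod.fst h; simpa using this)
  have hsum2 : Summable fun j : ℕ => ∑' d : ℕ, F (j, d + (j + 1)) := by
    have := hup.prod
    exact this.congr fun j => tsum_congr fun d => rfl
  have h1 : ∀ j : ℕ, ∑' k : ℕ, F (j, k)
      = (∑ k ∈ Finset.range (j + 1), F (j, k)) + ∑' d : ℕ, F (j, d + (j + 1)) :=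
    fun j => (Summable.sum_add_tsum_nat_add (j + 1) (hF.prod_factor j)).symm
  have hsum1 : Summable fun j : ℕ => ∑ k ∈ Finset.range (j + 1), F (j, k) := by
    have := (hF.prod).sub hsum2
    exact this.congr fun j => by rw [h1 j]; ring
  have hLsum : Summable fun j : ℕ => ∑ k ∈ Finset.range j, F (j, k) := by
    have := hsum1.sub hdiag
    exact this.congr fun j => by rw [Finset.sum_range_succ]; ring
  -- the lower triangle via an indicator function
  set H : ℕ × ℕ → ℂ := fun p => if p.2 < p.1 then F p else 0 with hHdef
  have hHn : Summable fun p => ‖H p‖ := by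
    refine Summable.of_nonneg_of_le (fun p => norm_nonneg _) (fun p => ?_) hn
    by_cases h : p.2 < p.1 <;> simp [hHdef, h]
  have hH : Summable H := hHn.of_norm
  have hbL : ∑' p, H p = ∑' j : ℕ, ∑ k ∈ Finset.range j, F (j, k) := by
    rw [Summable.tsum_prod hH]
    refine tsum_congr fun j => ?_
    rw [tsum_eq_sum (s := Finset.range j) (fun k hk => by
      rw [Finset.mem_range] at hk
      exact if_neg (by omega))]
    exact Finset.sum_congr rfl fun k hk => by
      rw [Finset.mem_range] at hk
      exact if_pos (by omega)
  have hGs : Summable fun p : ℕ × ℕ => H (p.2, p.1) :=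
    ((Equiv.prodComm ℕ ℕ).summable_iff (f := H)).2 hH
  have hlow' : Summable fun p : ℕ × ℕ => F (p.2 + p.1 + 1, p.1) := by
    have : Function.Injective (fun p : ℕ × ℕ => (p.2 + p.1 + 1, p.1)) := by
      intro a b h
      have h1 := congrArg Prod.fst h
      have h2 := congrArg Prod.snd h
      simp only at h1 h2
      exact Prod.ext h2 (by omega)
    exact hF.comp_injective this
  have hbR : ∑' p, H p = ∑' p : ℕ × ℕ, F (p.2 + p.1 + 1, p.1) := by
    have e1 : ∑' p : ℕ × ℕ, H ((Equiv.prodComm ℕ ℕ) p) = ∑' p, H p :=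
      Equiv.tsum_eq (Equiv.prodComm ℕ ℕ) H
    rw [← e1]
    have e2 : ∑' p : ℕ × ℕ, H ((Equiv.prodComm ℕ ℕ) p) = ∑' j : ℕ, ∑' k : ℕ, H (k, j) := by
      rw [show (fun p : ℕ × ℕ => H ((Equiv.prodComm ℕ ℕ) p)) = fun p : ℕ × ℕ => H (p.2, p.1)
        from rfl]
      exact Summable.tsum_prod hGs
    rw [e2, Summable.tsum_prod hlow']
    refine tsum_congr fun j => ?_
    have e3 := Summable.sum_add_tsum_nat_add (f := fun k => H (k, j)) (j + 1) (hGs.prod_factor j)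
    rw [← e3]
    have e4 : ∑ k ∈ Finset.range (j + 1), H (k, j) = 0 := by
      refine Finset.sum_eq_zero fun k hk => ?_
      rw [Finset.mem_range] at hk
      exact if_neg (by omega)
    rw [e4, zero_add]
    refine tsum_congr fun d => ?_
    show H (d + (j + 1), j) = F (d + j + 1, j)
    simp only [hHdef]
    rw [if_pos (show (d + (j + 1), j).2 < (d + (j + 1), j).1 by simp; omega)]
    rfl
  calc ∑' p, F p = ∑' j : ℕ, ∑' k : ℕ, F (j, k) := Summable.tsum_prod hF
  _ = ∑' j : ℕ, ((∑ k ∈ Finset.range (j + 1), F (j, k)) + ∑' d : ℕ, F (j, d + (j + 1))) :=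
      tsum_congr h1
  _ = (∑' j : ℕ, ∑ k ∈ Finset.range (j + 1), F (j, k))
      + ∑' j : ℕ, ∑' d : ℕ, F (j, d + (j + 1)) := Summable.tsum_add hsum1 hsum2
  _ = ((∑' j : ℕ, ∑ k ∈ Finset.range j, F (j, k)) + ∑' j : ℕ, F (j, j))
      + ∑' p : ℕ × ℕ, F (p.1, p.2 + p.1 + 1) := by
      congr 1
      · rw [← Summable.tsum_add hLsum hdiag]
        exact tsum_congr fun j => Finset.sum_range_succ _ _
      · rw [Summable.tsum_prod hup]
        exact tsum_congr fun j => tsum_congr fun d => rfl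
  _ = (∑' p : ℕ × ℕ, F (p.1, p.2 + p.1 + 1)) +
      (∑' p : ℕ × ℕ, F (p.2 + p.1 + 1, p.1)) + ∑' j : ℕ, F (j, j) := by
      rw [← hbL, hbR]
      ring



lemma norm_cast_add_one (k : ℕ) : ‖((k : ℂ) + 1)‖ = (k : ℝ) + 1 := by
  have h : ((k : ℂ) + 1) = ((k + 1 : ℕ) : ℂ) := by push_cast; ring
  rw [h, Complex.norm_natCast]
  push_cast
  ring

noncomputable def A (q : ℂ) (s : ℕ) : ℂ := ∑' k : ℕ, ((k : ℂ) + 1) ^ s * u q (k + 1)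

noncomputable def Zs (q : ℂ) : ℂ := ∑' k : ℕ, ((k : ℂ) + 1) ^ 2 * u q (k + 1) ^ 2

variable {q : ℂ}

lemma summableA_norm (hq : ‖q‖ < 1) (s : ℕ) :
    Summable fun k : ℕ => ‖((k : ℂ) + 1) ^ s * u q (k + 1)‖ := by
  have hM : Summable fun k : ℕ => (1 - ‖q‖)⁻¹ * (((k : ℝ) + 1) ^ s * ‖q‖ ^ (k + 1)) :=
    (summable1 hq s).mul_left _
  refine Summable.of_nonneg_of_le (fun k => norm_nonneg _) (fun k => ?_) hM
  rw [norm_mul, norm_pow, norm_cast_add_one]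
  calc ((k : ℝ) + 1) ^ s * ‖u q (k + 1)‖
      ≤ ((k : ℝ) + 1) ^ s * ((1 - ‖q‖)⁻¹ * ‖q‖ ^ (k + 1)) := by
        have := norm_u_le hq k
        gcongr
  _ = (1 - ‖q‖)⁻¹ * (((k : ℝ) + 1) ^ s * ‖q‖ ^ (k + 1)) := by ring

lemma summableA (hq : ‖q‖ < 1) (s : ℕ) :
    Summable fun k : ℕ => ((k : ℂ) + 1) ^ s * u q (k + 1) :=
  (summableA_norm hq s).of_norm

lemma summableZ (hq : ‖q‖ < 1) :
    Summable fun k : ℕ => ((k : ℂ) + 1) ^ 2 * u q (k + 1) ^ 2 := by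
  apply Summable.of_norm
  have hc : (0:ℝ) ≤ (1 - ‖q‖)⁻¹ := by
    have : (0:ℝ) < 1 - ‖q‖ := by
      have := norm_nonneg q; linarith
    positivity
  have hM : Summable fun k : ℕ =>
      ((1 - ‖q‖)⁻¹ * (1 - ‖q‖)⁻¹) * (((k : ℝ) + 1) ^ 2 * ‖q‖ ^ (k + 1)) :=
    (summable1 hq 2).mul_left _
  refine Summable.of_nonneg_of_le (fun k => norm_nonneg _) (fun k => ?_) hM
  rw [norm_mul, norm_pow, norm_pow, norm_cast_add_one]
  have hu := norm_u_le hq k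
  have hr1 : ‖q‖ ^ (k + 1) ≤ 1 :=
    pow_le_one₀ (norm_nonneg q) hq.le
  have hKn : (0:ℝ) ≤ (k : ℝ) + 1 := by positivity
  calc ((k : ℝ) + 1) ^ 2 * ‖u q (k + 1)‖ ^ 2
      ≤ ((k : ℝ) + 1) ^ 2 * ((1 - ‖q‖)⁻¹ * ‖q‖ ^ (k + 1)) ^ 2 := by
        gcongr
  _ = ((1 - ‖q‖)⁻¹ * (1 - ‖q‖)⁻¹) * (((k : ℝ) + 1) ^ 2 * ‖q‖ ^ (k + 1)) * ‖q‖ ^ (k + 1) := by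
        ring
  _ ≤ ((1 - ‖q‖)⁻¹ * (1 - ‖q‖)⁻¹) * (((k : ℝ) + 1) ^ 2 * ‖q‖ ^ (k + 1)) * 1 := by
        gcongr
  _ = ((1 - ‖q‖)⁻¹ * (1 - ‖q‖)⁻¹) * (((k : ℝ) + 1) ^ 2 * ‖q‖ ^ (k + 1)) := by ring

/-- The Lambert series rearrangement:
`∑ σ_s(n) qⁿ = ∑ kˢ q^k / (1 - q^k)`. -/
lemma lambert (hq : ‖q‖ < 1) (s : ℕ) :
    ∑' n : ℕ, (ArithmeticFunction.sigma s (n + 1) : ℂ) * q ^ (n + 1) = A q s := by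
  classical
  set F : ℕ × ℕ → ℂ := fun p => ((p.1 : ℂ) + 1) ^ s * q ^ ((p.1 + 1) * (p.2 + 1)) with hFdef
  have hr0 : (0:ℝ) ≤ ‖q‖ := norm_nonneg q
  have hFn : Summable fun p => ‖F p‖ := by
    have hM : Summable fun p : ℕ × ℕ =>
        (((p.1 : ℝ) + 1) ^ s * ‖q‖ ^ (p.1 + 1)) * ‖q‖ ^ p.2 :=
      (summable1 hq s).mul_of_nonneg (summable_geometric_of_lt_one hr0 hq)
        (fun k => by positivity) (fun k => by positivity)
    refine Summable.of_nonneg_of_le (fun p => norm_nonneg _) (fun p => ?_) hM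
    rw [hFdef]
    simp only
    rw [norm_mul, norm_pow, norm_pow, norm_cast_add_one]
    have hexp : (p.1 + 1) + p.2 ≤ (p.1 + 1) * (p.2 + 1) := by nlinarith
    calc ((p.1 : ℝ) + 1) ^ s * ‖q‖ ^ ((p.1 + 1) * (p.2 + 1))
        ≤ ((p.1 : ℝ) + 1) ^ s * ‖q‖ ^ ((p.1 + 1) + p.2) :=
          mul_le_mul_of_nonneg_left
            (pow_le_pow_of_le_one hr0 hq.le hexp) (by positivity)
    _ = (((p.1 : ℝ) + 1) ^ s * ‖q‖ ^ (p.1 + 1)) * ‖q‖ ^ p.2 := by rw [pow_add]; ring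
  have hF : Summable F := hFn.of_norm
  have hgroup := tsum_divisors hF
  have heval : ∀ n : ℕ, (∑ x ∈ Nat.divisorsAntidiagonal n, F (x.1 - 1, x.2 - 1))
      = (ArithmeticFunction.sigma s n : ℂ) * q ^ n := by
    intro n
    have hstep : ∀ x ∈ Nat.divisorsAntidiagonal n,
        F (x.1 - 1, x.2 - 1) = ((x.1 : ℕ) : ℂ) ^ s * q ^ n := by
      intro x hx
      rw [Nat.mem_divisorsAntidiagonal] at hx
      have hx1 : 1 ≤ x.1 := by
        rcases Nat.eq_zero_or_pos x.1 with h | h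
        · exfalso; apply hx.2; rw [← hx.1, h, zero_mul]
        · omega
      have hx2 : 1 ≤ x.2 := by
        rcases Nat.eq_zero_or_pos x.2 with h | h
        · exfalso; apply hx.2; rw [← hx.1, h, mul_zero]
        · omega
      have h1 : x.1 - 1 + 1 = x.1 := by omega
      have h2 : x.2 - 1 + 1 = x.2 := by omega
      rw [hFdef]
      simp only
      rw [h1, h2, hx.1]
      congr 1
      rw [← h1]
      push_cast
      ring
    rw [Finset.sum_congr rfl hstep, ← Finset.sum_mul]
    congr 1
    rw [ArithmeticFunction.sigma_apply]
    rw [Nat.sum_divisorsAntidiagonal (f := fun a _ => ((a : ℂ)) ^ s)]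
    rw [Nat.cast_sum]
    push_cast
    rfl
  have hg2 : HasSum (fun n => (ArithmeticFunction.sigma s n : ℂ) * q ^ n) (∑' p, F p) := by
    refine hgroup.congr_fun fun n => ?_
    exact (heval n).symm
  have hshift : ∑' n : ℕ, (ArithmeticFunction.sigma s (n + 1) : ℂ) * q ^ (n + 1)
      = ∑' p, F p := by
    rw [← hg2.tsum_eq, Summable.tsum_eq_zero_add hg2.summable]
    simp [ArithmeticFunction.map_zero]
  rw [hshift, Summable.tsum_prod hF]
  refine tsum_congr fun d => ?_
  have hx : ‖q ^ (d + 1)‖ < 1 := norm_pow_lt hq d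
  have hgeo : ∑' t : ℕ, (q ^ (d + 1)) ^ (t + 1) = q ^ (d + 1) / (1 - q ^ (d + 1)) := by
    have h1 : ∑' t : ℕ, (q ^ (d + 1)) ^ (t + 1) = ∑' t : ℕ, q ^ (d + 1) * (q ^ (d + 1)) ^ t :=
      tsum_congr fun t => by ring
    rw [h1, tsum_mul_left, tsum_geometric_of_norm_lt_one hx, div_eq_mul_inv]
  calc ∑' t : ℕ, F (d, t) = ∑' t : ℕ, ((d : ℂ) + 1) ^ s * (q ^ (d + 1)) ^ (t + 1) := by
        refine tsum_congr fun t => ?_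
        rw [hFdef]
        simp only
        rw [← pow_mul]
  _ = ((d : ℂ) + 1) ^ s * (q ^ (d + 1) / (1 - q ^ (d + 1))) := by rw [tsum_mul_left, hgeo]
  _ = ((d : ℂ) + 1) ^ s * u q (d + 1) := rfl


variable {q : ℂ}

/-- The fundamental Lambert-series multiplication identity
`u_j u_k = u_{j+k} (u_j + u_k + 1)`. -/
lemma u_mul (hq : ‖q‖ < 1) (j k : ℕ) :
    u q (j + 1) * u q (k + 1) = u q (j + k + 2) * (u q (j + 1) + u q (k + 1) + 1) := by
  have h1 := one_sub_ne hq j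
  have h2 := one_sub_ne hq k
  have h3 : (1 : ℂ) - q ^ (j + k + 2) ≠ 0 := one_sub_ne hq (j + k + 1)
  have hpow : q ^ (j + k + 2) = q ^ (j + 1) * q ^ (k + 1) := by
    rw [← pow_add]; congr 1; omega
  rw [u, u, u, hpow]
  have h3' : (1 : ℂ) - q ^ (j + 1) * q ^ (k + 1) ≠ 0 := by rw [← hpow]; exact h3
  field_simp
  ring

lemma nat_sum1 (n : ℕ) : 2 * ∑ k ∈ Finset.range (n + 1), (k + 1) = (n + 1) * (n + 2) := by
  induction n with
  | zero => rfl
  | succ n ih =>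
    rw [Finset.sum_range_succ, Nat.mul_add, ih]
    ring

lemma nat_sum3 (n : ℕ) :
    6 * ∑ k ∈ Finset.range (n + 1), (k + 1) * (k + 1) = (n + 1) * (n + 2) * (2 * n + 3) := by
  induction n with
  | zero => rfl
  | succ n ih =>
    rw [Finset.sum_range_succ, Nat.mul_add, ih]
    ring

lemma nat_sum2 (n : ℕ) :
    6 * ∑ k ∈ Finset.range (n + 1), (k + 1) * (n - k + 1) = (n + 1) * (n + 2) * (n + 3) := by
  induction n with
  | zero => rfl
  | succ n ih =>
    have hcongr : ∑ k ∈ Finset.range (n + 1), (k + 1) * (n + 1 - k + 1)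
        = ∑ k ∈ Finset.range (n + 1), ((k + 1) * (n - k + 1) + (k + 1)) := by
      refine Finset.sum_congr rfl fun k hk => ?_
      rw [Finset.mem_range] at hk
      have : n + 1 - k + 1 = (n - k + 1) + 1 := by omega
      rw [this]
      ring
    rw [Finset.sum_range_succ, hcongr, Finset.sum_add_distrib]
    have hlast : (n + 1 + 1) * (n + 1 - (n + 1) + 1) = n + 2 := by
      rw [Nat.sub_self]
      omega
    rw [hlast]
    rw [Nat.mul_add, Nat.mul_add, ih]
    rw [show (6 : ℕ) * ∑ k ∈ Finset.range (n + 1), (k + 1)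
        = 3 * (2 * ∑ k ∈ Finset.range (n + 1), (k + 1)) by ring, nat_sum1]
    ring

/-- Summability of weighted double products of `u`'s. -/
lemma summable_w_uu (hq : ‖q‖ < 1) {W : ℕ × ℕ → ℂ} {g1 g2 : ℕ × ℕ → ℕ}
    (hW : ∀ p : ℕ × ℕ, ‖W p‖ ≤ 4 * ((p.1 : ℝ) + 1) ^ 3 * ((p.2 : ℝ) + 1) ^ 3)
    (hg1 : ∀ p : ℕ × ℕ, p.1 + 1 ≤ g1 p) (hg2 : ∀ p : ℕ × ℕ, p.2 + 1 ≤ g2 p) :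
    Summable fun p : ℕ × ℕ => ‖W p * u q (g1 p) * u q (g2 p)‖ := by
  have hc : (0:ℝ) ≤ (1 - ‖q‖)⁻¹ := by
    have := norm_nonneg q
    have h2 : (0:ℝ) < 1 - ‖q‖ := by linarith
    positivity
  refine summable_grid hq (4 * ((1 - ‖q‖)⁻¹ * (1 - ‖q‖)⁻¹)) fun p => ?_
  have hu1 : ‖u q (g1 p)‖ ≤ (1 - ‖q‖)⁻¹ * ‖q‖ ^ (p.1 + 1) :=
    norm_u_le' hq (by omega) (hg1 p)
  have hu2 : ‖u q (g2 p)‖ ≤ (1 - ‖q‖)⁻¹ * ‖q‖ ^ (p.2 + 1) :=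
    norm_u_le' hq (by omega) (hg2 p)
  rw [norm_mul, norm_mul]
  calc ‖W p‖ * ‖u q (g1 p)‖ * ‖u q (g2 p)‖
      ≤ (4 * ((p.1 : ℝ) + 1) ^ 3 * ((p.2 : ℝ) + 1) ^ 3) * ((1 - ‖q‖)⁻¹ * ‖q‖ ^ (p.1 + 1))
        * ((1 - ‖q‖)⁻¹ * ‖q‖ ^ (p.2 + 1)) :=
      mul_le_mul (mul_le_mul (hW p) hu1 (norm_nonneg _) (by positivity)) hu2
        (norm_nonneg _) (by positivity)
  _ = (4 * ((1 - ‖q‖)⁻¹ * (1 - ‖q‖)⁻¹)) * (((p.1 : ℝ) + 1) ^ 3 * ‖q‖ ^ (p.1 + 1))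
      * (((p.2 : ℝ) + 1) ^ 3 * ‖q‖ ^ (p.2 + 1)) := by ring

/-- Summability of weighted single `u (p.1 + p.2 + 2)`. -/
lemma summable_w_u (hq : ‖q‖ < 1) {W : ℕ × ℕ → ℂ}
    (hW : ∀ p : ℕ × ℕ, ‖W p‖ ≤ 4 * ((p.1 : ℝ) + 1) ^ 3 * ((p.2 : ℝ) + 1) ^ 3) :
    Summable fun p : ℕ × ℕ => ‖W p * u q (p.1 + p.2 + 2)‖ := by
  have hc : (0:ℝ) ≤ (1 - ‖q‖)⁻¹ := by
    have := norm_nonneg q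
    have h2 : (0:ℝ) < 1 - ‖q‖ := by linarith
    positivity
  refine summable_grid hq (4 * (1 - ‖q‖)⁻¹) fun p => ?_
  have hu : ‖u q (p.1 + p.2 + 2)‖ ≤ (1 - ‖q‖)⁻¹ * ‖q‖ ^ (p.1 + p.2 + 2) :=
    norm_u_le' hq (by omega) (le_refl _)
  have hsplit : ‖q‖ ^ (p.1 + p.2 + 2) = ‖q‖ ^ (p.1 + 1) * ‖q‖ ^ (p.2 + 1) := by
    rw [← pow_add]; congr 1; omega
  rw [norm_mul]
  have hstep : ‖W p‖ * ‖u q (p.1 + p.2 + 2)‖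
      ≤ (4 * ((p.1 : ℝ) + 1) ^ 3 * ((p.2 : ℝ) + 1) ^ 3)
        * ((1 - ‖q‖)⁻¹ * (‖q‖ ^ (p.1 + 1) * ‖q‖ ^ (p.2 + 1))) := by
    refine mul_le_mul (hW p) ?_ (norm_nonneg _) (by positivity)
    rw [← hsplit]
    exact hu
  calc ‖W p‖ * ‖u q (p.1 + p.2 + 2)‖
      ≤ (4 * ((p.1 : ℝ) + 1) ^ 3 * ((p.2 : ℝ) + 1) ^ 3)
        * ((1 - ‖q‖)⁻¹ * (‖q‖ ^ (p.1 + 1) * ‖q‖ ^ (p.2 + 1))) := hstep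
  _ = (4 * (1 - ‖q‖)⁻¹) * (((p.1 : ℝ) + 1) ^ 3 * ‖q‖ ^ (p.1 + 1))
      * (((p.2 : ℝ) + 1) ^ 3 * ‖q‖ ^ (p.2 + 1)) := by ring

lemma cube1 {a b : ℝ} (ha : 1 ≤ a) (hb : 1 ≤ b) : a * b ≤ 4 * a ^ 3 * b ^ 3 := by
  have h1 : a ≤ a ^ 3 := le_self_pow₀ ha (by norm_num)
  have h2 : b ≤ b ^ 3 := le_self_pow₀ hb (by norm_num)
  have h3 : a * b ≤ a ^ 3 * b ^ 3 := mul_le_mul h1 h2 (by linarith) (by positivity)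
  have h4 : (0:ℝ) ≤ a ^ 3 * b ^ 3 := by positivity
  linarith

lemma cube2 {a b : ℝ} (ha : 1 ≤ a) (hb : 1 ≤ b) : a ^ 2 ≤ 4 * a ^ 3 * b ^ 3 := by
  have h1 : a ^ 2 ≤ a ^ 3 := pow_le_pow_right₀ ha (by norm_num)
  have h2 : (1:ℝ) ≤ b ^ 3 := one_le_pow₀ hb
  have h3 : a ^ 3 * 1 ≤ a ^ 3 * b ^ 3 :=
    mul_le_mul_of_nonneg_left h2 (by positivity)
  have h4 : (0:ℝ) ≤ a ^ 3 * b ^ 3 := by positivity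
  nlinarith

lemma hab_le {a b : ℝ} (ha : 1 ≤ a) (hb : 1 ≤ b) : a + b ≤ 2 * a * b := by
  have h0 : (0:ℝ) ≤ (a - 1) * (b - 1) := mul_nonneg (by linarith) (by linarith)
  nlinarith

lemma cube3 {a b : ℝ} (ha : 1 ≤ a) (hb : 1 ≤ b) : a * (a + b) ≤ 4 * a ^ 3 * b ^ 3 := by
  have h1 := hab_le ha hb
  have h2 : a * (a + b) ≤ a * (2 * a * b) :=
    mul_le_mul_of_nonneg_left h1 (by linarith)
  have h3 : a ^ 2 * b ≤ a ^ 3 * b ^ 3 :=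
    mul_le_mul (pow_le_pow_right₀ ha (by norm_num)) (le_self_pow₀ hb (by norm_num))
      (by linarith) (by positivity)
  have h4 : (0:ℝ) ≤ a ^ 3 * b ^ 3 := by positivity
  nlinarith

lemma cube4 {a b : ℝ} (ha : 1 ≤ a) (hb : 1 ≤ b) : (a + b) ^ 2 ≤ 4 * a ^ 3 * b ^ 3 := by
  have h1 := hab_le ha hb
  have h2 : (a + b) ^ 2 ≤ (2 * a * b) ^ 2 :=
    pow_le_pow_left₀ (by linarith) h1 2
  have h3 : a ^ 2 * b ^ 2 ≤ a ^ 3 * b ^ 3 :=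
    mul_le_mul (pow_le_pow_right₀ ha (by norm_num)) (pow_le_pow_right₀ hb (by norm_num))
      (by positivity) (by positivity)
  nlinarith

lemma cube5 {a b : ℝ} (ha : 1 ≤ a) (hb : 1 ≤ b) : b ^ 2 ≤ 4 * a ^ 3 * b ^ 3 := by
  have h1 : b ^ 2 ≤ b ^ 3 := pow_le_pow_right₀ hb (by norm_num)
  have h2 : (1:ℝ) ≤ a ^ 3 := one_le_pow₀ ha
  have h3 : 1 * b ^ 3 ≤ a ^ 3 * b ^ 3 :=
    mul_le_mul_of_nonneg_right h2 (by positivity)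
  nlinarith

variable {q : ℂ}

lemma norm_cast_add_two (j k : ℕ) : ‖((j : ℂ) + (k : ℂ) + 2)‖ = (j : ℝ) + (k : ℝ) + 2 := by
  have h : ((j : ℂ) + (k : ℂ) + 2) = ((j + k + 2 : ℕ) : ℂ) := by push_cast; ring
  rw [h, Complex.norm_natCast]
  push_cast
  ring

lemma one_le_cast (j : ℕ) : (1:ℝ) ≤ (j : ℝ) + 1 := by
  have := Nat.cast_nonneg (α := ℝ) j
  linarith

-- scalar weight bounds
lemma wb1 (p : ℕ × ℕ) : ‖((p.1 : ℂ) + 1) * ((p.2 : ℂ) + 1)‖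
    ≤ 4 * ((p.1 : ℝ) + 1) ^ 3 * ((p.2 : ℝ) + 1) ^ 3 := by
  rw [norm_mul, norm_cast_add_one, norm_cast_add_one]
  exact cube1 (one_le_cast p.1) (one_le_cast p.2)

lemma wb2 (p : ℕ × ℕ) : ‖((p.1 : ℂ) + 1) ^ 2‖
    ≤ 4 * ((p.1 : ℝ) + 1) ^ 3 * ((p.2 : ℝ) + 1) ^ 3 := by
  rw [norm_pow, norm_cast_add_one]
  exact cube2 (one_le_cast p.1) (one_le_cast p.2)

lemma wb3 (p : ℕ × ℕ) : ‖((p.1 : ℂ) + 1) * ((p.1 : ℂ) + (p.2 : ℂ) + 2)‖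
    ≤ 4 * ((p.1 : ℝ) + 1) ^ 3 * ((p.2 : ℝ) + 1) ^ 3 := by
  rw [norm_mul, norm_cast_add_one, norm_cast_add_two]
  have h := cube3 (one_le_cast p.1) (one_le_cast p.2)
  calc ((p.1 : ℝ) + 1) * ((p.1 : ℝ) + (p.2 : ℝ) + 2)
      = ((p.1 : ℝ) + 1) * (((p.1 : ℝ) + 1) + ((p.2 : ℝ) + 1)) := by ring
  _ ≤ 4 * ((p.1 : ℝ) + 1) ^ 3 * ((p.2 : ℝ) + 1) ^ 3 := h

lemma wb4 (p : ℕ × ℕ) : ‖((p.1 : ℂ) + (p.2 : ℂ) + 2) ^ 2‖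
    ≤ 4 * ((p.1 : ℝ) + 1) ^ 3 * ((p.2 : ℝ) + 1) ^ 3 := by
  rw [norm_pow, norm_cast_add_two]
  have h := cube4 (one_le_cast p.1) (one_le_cast p.2)
  calc ((p.1 : ℝ) + (p.2 : ℝ) + 2) ^ 2
      = (((p.1 : ℝ) + 1) + ((p.2 : ℝ) + 1)) ^ 2 := by ring
  _ ≤ 4 * ((p.1 : ℝ) + 1) ^ 3 * ((p.2 : ℝ) + 1) ^ 3 := h

lemma wb5 (p : ℕ × ℕ) : ‖((p.2 : ℂ) + 1) ^ 2‖
    ≤ 4 * ((p.1 : ℝ) + 1) ^ 3 * ((p.2 : ℝ) + 1) ^ 3 := by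
  rw [norm_pow, norm_cast_add_one]
  exact cube5 (one_le_cast p.1) (one_le_cast p.2)

-- Summability of all the grid functions we use
lemma sumn_f1 (hq : ‖q‖ < 1) : Summable fun p : ℕ × ℕ =>
    ‖((p.1 : ℂ) + 1) * ((p.2 : ℂ) + 1) * u q (p.1 + 1) * u q (p.2 + 1)‖ :=
  summable_w_uu hq wb1 (fun p => le_refl _) (fun p => le_refl _)

lemma sumn_f2 (hq : ‖q‖ < 1) : Summable fun p : ℕ × ℕ =>
    ‖((p.1 : ℂ) + 1) ^ 2 * u q (p.1 + 1) * u q (p.2 + 1)‖ :=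
  summable_w_uu hq wb2 (fun p => le_refl _) (fun p => le_refl _)

lemma sumn_x1 (hq : ‖q‖ < 1) : Summable fun p : ℕ × ℕ =>
    ‖((p.1 : ℂ) + 1) * ((p.2 : ℂ) + 1) * u q (p.1 + 1) * u q (p.1 + p.2 + 2)‖ :=
  summable_w_uu hq wb1 (fun p => le_refl _) (fun p => by omega)

lemma sumn_v11 (hq : ‖q‖ < 1) : Summable fun p : ℕ × ℕ =>
    ‖((p.1 : ℂ) + 1) * ((p.1 : ℂ) + (p.2 : ℂ) + 2) * u q (p.1 + 1) * u q (p.1 + p.2 + 2)‖ :=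
  summable_w_uu hq wb3 (fun p => le_refl _) (fun p => by omega)

lemma sumn_v20 (hq : ‖q‖ < 1) : Summable fun p : ℕ × ℕ =>
    ‖((p.1 : ℂ) + 1) ^ 2 * u q (p.1 + 1) * u q (p.1 + p.2 + 2)‖ :=
  summable_w_uu hq wb2 (fun p => le_refl _) (fun p => by omega)

lemma sumn_v02 (hq : ‖q‖ < 1) : Summable fun p : ℕ × ℕ =>
    ‖((p.1 : ℂ) + (p.2 : ℂ) + 2) ^ 2 * u q (p.1 + 1) * u q (p.1 + p.2 + 2)‖ :=
  summable_w_uu hq wb4 (fun p => le_refl _) (fun p => by omega)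

lemma sumn_y (hq : ‖q‖ < 1) : Summable fun p : ℕ × ℕ =>
    ‖((p.2 : ℂ) + 1) ^ 2 * u q (p.1 + 1) * u q (p.1 + p.2 + 2)‖ :=
  summable_w_uu hq wb5 (fun p => le_refl _) (fun p => by omega)

lemma sumn_m1 (hq : ‖q‖ < 1) : Summable fun p : ℕ × ℕ =>
    ‖((p.1 : ℂ) + 1) * ((p.2 : ℂ) + 1) * u q (p.2 + 1) * u q (p.1 + p.2 + 2)‖ := by
  have h := summable_w_uu (q := q) hq (W := fun p => ((p.1 : ℂ) + 1) * ((p.2 : ℂ) + 1))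
    (g1 := fun p => p.1 + p.2 + 2) (g2 := fun p => p.2 + 1) wb1
    (fun p => by show p.1 + 1 ≤ p.1 + p.2 + 2; omega) (fun p => le_refl _)
  exact h.congr fun p => congrArg norm (by ring)

lemma sumn_xs (hq : ‖q‖ < 1) : Summable fun p : ℕ × ℕ =>
    ‖((p.1 : ℂ) + 1) ^ 2 * u q (p.2 + 1) * u q (p.1 + p.2 + 2)‖ := by
  have h := summable_w_uu (q := q) hq (W := fun p => ((p.1 : ℂ) + 1) ^ 2)
    (g1 := fun p => p.1 + p.2 + 2) (g2 := fun p => p.2 + 1) wb2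
    (fun p => by show p.1 + 1 ≤ p.1 + p.2 + 2; omega) (fun p => le_refl _)
  exact h.congr fun p => congrArg norm (by ring)

lemma sumn_c1 (hq : ‖q‖ < 1) : Summable fun p : ℕ × ℕ =>
    ‖((p.1 : ℂ) + 1) * ((p.2 : ℂ) + 1) * u q (p.1 + p.2 + 2)‖ :=
  summable_w_u hq wb1

lemma sumn_c2 (hq : ‖q‖ < 1) : Summable fun p : ℕ × ℕ =>
    ‖((p.1 : ℂ) + 1) ^ 2 * u q (p.1 + p.2 + 2)‖ :=
  summable_w_u hq wb2

/-- Evaluation of `C₁ = ∑_{j,k≥1} j k u_{j+k}`. -/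
lemma C1_eval (hq : ‖q‖ < 1) :
    A q 3 - A q 1 = 6 * ∑' p : ℕ × ℕ, ((p.1 : ℂ) + 1) * ((p.2 : ℂ) + 1) * u q (p.1 + p.2 + 2) := by
  have hc1 : Summable fun p : ℕ × ℕ =>
      ((p.1 : ℂ) + 1) * ((p.2 : ℂ) + 1) * u q (p.1 + p.2 + 2) := (sumn_c1 hq).of_norm
  have hgr := tsum_antidiag hc1
  have heval : ∀ n : ℕ, (∑ k ∈ Finset.range (n + 1),
        ((k : ℂ) + 1) * (((n - k : ℕ) : ℂ) + 1) * u q (k + (n - k) + 2))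
      = (((n : ℂ) + 1) * ((n : ℂ) + 2) * ((n : ℂ) + 3) / 6) * u q (n + 2) := by
    intro n
    have hstep : ∀ k ∈ Finset.range (n + 1),
        ((k : ℂ) + 1) * (((n - k : ℕ) : ℂ) + 1) * u q (k + (n - k) + 2)
        = (((k + 1) * (n - k + 1) : ℕ) : ℂ) * u q (n + 2) := by
      intro k hk
      rw [Finset.mem_range] at hk
      rw [show k + (n - k) + 2 = n + 2 by omega]
      congr 1
      push_cast
      ring
    rw [Finset.sum_congr rfl hstep, ← Finset.sum_mul, ← Nat.cast_sum]
    congr 1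
    have h6 := nat_sum2 n
    have : ((6 * ∑ k ∈ Finset.range (n + 1), (k + 1) * (n - k + 1) : ℕ) : ℂ)
        = (((n + 1) * (n + 2) * (n + 3) : ℕ) : ℂ) := by rw [h6]
    push_cast at this
    field_simp
    push_cast
    linear_combination this
  have hgr2 : HasSum (fun n : ℕ => (((n : ℂ) + 1) * ((n : ℂ) + 2) * ((n : ℂ) + 3) / 6)
        * u q (n + 2))
      (∑' p : ℕ × ℕ, ((p.1 : ℂ) + 1) * ((p.2 : ℂ) + 1) * u q (p.1 + p.2 + 2)) := by
    refine hgr.congr_fun fun n => ?_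
    exact (heval n).symm
  have hsub : Summable fun k : ℕ => (((k : ℂ) + 1) ^ 3 - ((k : ℂ) + 1)) * u q (k + 1) :=
    ((summableA hq 3).sub (summableA hq 1)).congr (fun k => by ring)
  have hsub31 : A q 3 - A q 1
      = ∑' k : ℕ, (((k : ℂ) + 1) ^ 3 - ((k : ℂ) + 1)) * u q (k + 1) := by
    rw [A, A, ← Summable.tsum_sub (summableA hq 3) (summableA hq 1)]
    exact tsum_congr fun k => by ring
  rw [hsub31, Summable.tsum_eq_zero_add hsub]
  have h0 : (((0 : ℕ) : ℂ) + 1) ^ 3 - (((0 : ℕ) : ℂ) + 1) = 0 := by norm_num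
  rw [h0, zero_mul, zero_add]
  rw [← hgr2.tsum_eq, ← tsum_mul_left]
  refine tsum_congr fun n => ?_
  push_cast
  ring

/-- Evaluation of `C₂ = ∑_{j,k≥1} j² u_{j+k}`. -/
lemma C2_eval (hq : ‖q‖ < 1) :
    2 * A q 3 - 3 * A q 2 + A q 1
      = 6 * ∑' p : ℕ × ℕ, ((p.1 : ℂ) + 1) ^ 2 * u q (p.1 + p.2 + 2) := by
  have hc2 : Summable fun p : ℕ × ℕ =>
      ((p.1 : ℂ) + 1) ^ 2 * u q (p.1 + p.2 + 2) := (sumn_c2 hq).of_norm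
  have hgr := tsum_antidiag hc2
  have heval : ∀ n : ℕ, (∑ k ∈ Finset.range (n + 1),
        ((k : ℂ) + 1) ^ 2 * u q (k + (n - k) + 2))
      = (((n : ℂ) + 1) * ((n : ℂ) + 2) * (2 * (n : ℂ) + 3) / 6) * u q (n + 2) := by
    intro n
    have hstep : ∀ k ∈ Finset.range (n + 1),
        ((k : ℂ) + 1) ^ 2 * u q (k + (n - k) + 2)
        = (((k + 1) * (k + 1) : ℕ) : ℂ) * u q (n + 2) := by
      intro k hk
      rw [Finset.mem_range] at hk
      rw [show k + (n - k) + 2 = n + 2 by omega]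
      congr 1
      push_cast
      ring
    rw [Finset.sum_congr rfl hstep, ← Finset.sum_mul, ← Nat.cast_sum]
    congr 1
    have h6 := nat_sum3 n
    have : ((6 * ∑ k ∈ Finset.range (n + 1), (k + 1) * (k + 1) : ℕ) : ℂ)
        = (((n + 1) * (n + 2) * (2 * n + 3) : ℕ) : ℂ) := by rw [h6]
    push_cast at this
    field_simp
    push_cast
    linear_combination this
  have hgr2 : HasSum (fun n : ℕ => (((n : ℂ) + 1) * ((n : ℂ) + 2) * (2 * (n : ℂ) + 3) / 6)
        * u q (n + 2))
      (∑' p : ℕ × ℕ, ((p.1 : ℂ) + 1) ^ 2 * u q (p.1 + p.2 + 2)) := by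
    refine hgr.congr_fun fun n => ?_
    exact (heval n).symm
  have hsub : Summable fun k : ℕ =>
      (2 * ((k : ℂ) + 1) ^ 3 - 3 * ((k : ℂ) + 1) ^ 2 + ((k : ℂ) + 1)) * u q (k + 1) :=
    ((((summableA hq 3).mul_left 2).sub ((summableA hq 2).mul_left 3)).add
      (summableA hq 1)).congr (fun k => by ring)
  have hsub31 : 2 * A q 3 - 3 * A q 2 + A q 1
      = ∑' k : ℕ, (2 * ((k : ℂ) + 1) ^ 3 - 3 * ((k : ℂ) + 1) ^ 2 + ((k : ℂ) + 1))
        * u q (k + 1) := by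
    rw [A, A, A, ← tsum_mul_left (a := (2:ℂ)), ← tsum_mul_left (a := (3:ℂ)),
      ← Summable.tsum_sub ((summableA hq 3).mul_left 2) ((summableA hq 2).mul_left 3),
      ← Summable.tsum_add (((summableA hq 3).mul_left 2).sub ((summableA hq 2).mul_left 3))
        (summableA hq 1)]
    exact tsum_congr fun k => by ring
  rw [hsub31, Summable.tsum_eq_zero_add hsub]
  have h0 : (2 * (((0 : ℕ) : ℂ) + 1) ^ 3 - 3 * (((0 : ℕ) : ℂ) + 1) ^ 2 + (((0 : ℕ) : ℂ) + 1))
      = 0 := by norm_num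
  rw [h0, zero_mul, zero_add]
  rw [← hgr2.tsum_eq, ← tsum_mul_left]
  refine tsum_congr fun n => ?_
  push_cast
  ring


variable {q : ℂ}

/-- The heart of the matter : the Besge/Ramanujan identity in Lambert-series form. -/
lemma main_identity (hq : ‖q‖ < 1) :
    288 * (A q 2 + Zs q) + 576 * (A q 1 * A q 1) = 240 * A q 3 + 48 * A q 1 := by
  -- complex summability of all grid functions
  have s_f1 : Summable fun p : ℕ × ℕ =>
      ((p.1 : ℂ) + 1) * ((p.2 : ℂ) + 1) * u q (p.1 + 1) * u q (p.2 + 1) := (sumn_f1 hq).of_norm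
  have s_f2 : Summable fun p : ℕ × ℕ =>
      ((p.1 : ℂ) + 1) ^ 2 * u q (p.1 + 1) * u q (p.2 + 1) := (sumn_f2 hq).of_norm
  have s_x1 : Summable fun p : ℕ × ℕ =>
      ((p.1 : ℂ) + 1) * ((p.2 : ℂ) + 1) * u q (p.1 + 1) * u q (p.1 + p.2 + 2) :=
    (sumn_x1 hq).of_norm
  have s_v11 : Summable fun p : ℕ × ℕ =>
      ((p.1 : ℂ) + 1) * ((p.1 : ℂ) + (p.2 : ℂ) + 2) * u q (p.1 + 1) * u q (p.1 + p.2 + 2) :=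
    (sumn_v11 hq).of_norm
  have s_v20 : Summable fun p : ℕ × ℕ =>
      ((p.1 : ℂ) + 1) ^ 2 * u q (p.1 + 1) * u q (p.1 + p.2 + 2) := (sumn_v20 hq).of_norm
  have s_v02 : Summable fun p : ℕ × ℕ =>
      ((p.1 : ℂ) + (p.2 : ℂ) + 2) ^ 2 * u q (p.1 + 1) * u q (p.1 + p.2 + 2) :=
    (sumn_v02 hq).of_norm
  have s_y : Summable fun p : ℕ × ℕ =>
      ((p.2 : ℂ) + 1) ^ 2 * u q (p.1 + 1) * u q (p.1 + p.2 + 2) := (sumn_y hq).of_norm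
  have s_m1 : Summable fun p : ℕ × ℕ =>
      ((p.1 : ℂ) + 1) * ((p.2 : ℂ) + 1) * u q (p.2 + 1) * u q (p.1 + p.2 + 2) :=
    (sumn_m1 hq).of_norm
  have s_xs : Summable fun p : ℕ × ℕ =>
      ((p.1 : ℂ) + 1) ^ 2 * u q (p.2 + 1) * u q (p.1 + p.2 + 2) := (sumn_xs hq).of_norm
  have s_c1 : Summable fun p : ℕ × ℕ =>
      ((p.1 : ℂ) + 1) * ((p.2 : ℂ) + 1) * u q (p.1 + p.2 + 2) := (sumn_c1 hq).of_norm
  have s_c2 : Summable fun p : ℕ × ℕ =>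
      ((p.1 : ℂ) + 1) ^ 2 * u q (p.1 + p.2 + 2) := (sumn_c2 hq).of_norm
  -- abbreviations
  set V11 := ∑' p : ℕ × ℕ,
    ((p.1 : ℂ) + 1) * ((p.1 : ℂ) + (p.2 : ℂ) + 2) * u q (p.1 + 1) * u q (p.1 + p.2 + 2)
    with hV11
  set V20 := ∑' p : ℕ × ℕ, ((p.1 : ℂ) + 1) ^ 2 * u q (p.1 + 1) * u q (p.1 + p.2 + 2) with hV20
  set V02 := ∑' p : ℕ × ℕ,
    ((p.1 : ℂ) + (p.2 : ℂ) + 2) ^ 2 * u q (p.1 + 1) * u q (p.1 + p.2 + 2) with hV02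
  -- Step 1 : A1² as a double sum
  have hprod : A q 1 * A q 1 = ∑' p : ℕ × ℕ,
      ((p.1 : ℂ) + 1) * ((p.2 : ℂ) + 1) * u q (p.1 + 1) * u q (p.2 + 1) := by
    rw [A]
    rw [tsum_mul_tsum_of_summable_norm (summableA_norm hq 1) (summableA_norm hq 1)]
    exact tsum_congr fun p => by ring
  -- Step 2 : triangle split of the f1 double sum
  have hsplit1 := split3 (sumn_f1 hq)
  have hup1 : (∑' p : ℕ × ℕ,
      ((p.1 : ℂ) + 1) * (((p.2 + p.1 + 1 : ℕ) : ℂ) + 1) * u q (p.1 + 1)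
        * u q (p.2 + p.1 + 1 + 1)) = V11 := by
    refine tsum_congr fun p => ?_
    rw [show p.2 + p.1 + 1 + 1 = p.1 + p.2 + 2 by omega]
    push_cast
    ring
  have hlow1 : (∑' p : ℕ × ℕ,
      (((p.2 + p.1 + 1 : ℕ) : ℂ) + 1) * ((p.1 : ℂ) + 1) * u q (p.2 + p.1 + 1 + 1)
        * u q (p.1 + 1)) = V11 := by
    refine tsum_congr fun p => ?_
    rw [show p.2 + p.1 + 1 + 1 = p.1 + p.2 + 2 by omega]
    push_cast
    ring
  have hdiag1 : (∑' j : ℕ, ((j : ℂ) + 1) * ((j : ℂ) + 1) * u q (j + 1) * u q (j + 1))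
      = Zs q := by
    rw [Zs]
    exact tsum_congr fun j => by ring
  have e1 : A q 1 * A q 1 = V11 + V11 + Zs q := by
    rw [hprod, hsplit1, hup1, hlow1, hdiag1]
  -- Step 3 : Lambert multiplication decomposition of the f1 double sum
  have hpt1 : ∀ p : ℕ × ℕ,
      ((p.1 : ℂ) + 1) * ((p.2 : ℂ) + 1) * u q (p.1 + 1) * u q (p.2 + 1)
      = ((p.1 : ℂ) + 1) * ((p.2 : ℂ) + 1) * u q (p.1 + 1) * u q (p.1 + p.2 + 2)
        + ((p.1 : ℂ) + 1) * ((p.2 : ℂ) + 1) * u q (p.2 + 1) * u q (p.1 + p.2 + 2)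
        + ((p.1 : ℂ) + 1) * ((p.2 : ℂ) + 1) * u q (p.1 + p.2 + 2) := fun p => by
    linear_combination (((p.1 : ℂ) + 1) * ((p.2 : ℂ) + 1)) * u_mul hq p.1 p.2
  have hdec1 : (∑' p : ℕ × ℕ,
      ((p.1 : ℂ) + 1) * ((p.2 : ℂ) + 1) * u q (p.1 + 1) * u q (p.2 + 1))
      = (∑' p : ℕ × ℕ,
          ((p.1 : ℂ) + 1) * ((p.2 : ℂ) + 1) * u q (p.1 + 1) * u q (p.1 + p.2 + 2))
        + (∑' p : ℕ × ℕ,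
          ((p.1 : ℂ) + 1) * ((p.2 : ℂ) + 1) * u q (p.2 + 1) * u q (p.1 + p.2 + 2))
        + (∑' p : ℕ × ℕ,
          ((p.1 : ℂ) + 1) * ((p.2 : ℂ) + 1) * u q (p.1 + p.2 + 2)) := by
    rw [tsum_congr hpt1, Summable.tsum_add (s_x1.add s_m1) s_c1, Summable.tsum_add s_x1 s_m1]
  have hm1 : (∑' p : ℕ × ℕ,
      ((p.1 : ℂ) + 1) * ((p.2 : ℂ) + 1) * u q (p.2 + 1) * u q (p.1 + p.2 + 2))
      = ∑' p : ℕ × ℕ,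
        ((p.1 : ℂ) + 1) * ((p.2 : ℂ) + 1) * u q (p.1 + 1) * u q (p.1 + p.2 + 2) := by
    rw [← Equiv.tsum_eq (Equiv.prodComm ℕ ℕ) (fun p : ℕ × ℕ =>
      ((p.1 : ℂ) + 1) * ((p.2 : ℂ) + 1) * u q (p.1 + 1) * u q (p.1 + p.2 + 2))]
    refine tsum_congr fun p => ?_
    simp only [Equiv.prodComm_apply, Prod.fst_swap, Prod.snd_swap]
    rw [show p.2 + p.1 + 2 = p.1 + p.2 + 2 by omega]
    ring
  have hx1v : (∑' p : ℕ × ℕ,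
      ((p.1 : ℂ) + 1) * ((p.2 : ℂ) + 1) * u q (p.1 + 1) * u q (p.1 + p.2 + 2))
      = V11 - V20 := by
    rw [hV11, hV20, ← Summable.tsum_sub s_v11 s_v20]
    exact tsum_congr fun p => by ring
  have hC1 : (∑' p : ℕ × ℕ, ((p.1 : ℂ) + 1) * ((p.2 : ℂ) + 1) * u q (p.1 + p.2 + 2))
      = (A q 3 - A q 1) / 6 := by
    rw [eq_div_iff (by norm_num : (6:ℂ) ≠ 0)]
    linear_combination -C1_eval hq
  have e2 : A q 1 * A q 1 = (V11 - V20) + (V11 - V20) + (A q 3 - A q 1) / 6 := by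
    rw [hprod, hdec1, hm1, hx1v, hC1]
  -- Step 4 : same for the f2 double sum
  have hsplit2 := split3 (sumn_f2 hq)
  have hup2 : (∑' p : ℕ × ℕ,
      ((p.1 : ℂ) + 1) ^ 2 * u q (p.1 + 1) * u q (p.2 + p.1 + 1 + 1)) = V20 := by
    refine tsum_congr fun p => ?_
    rw [show p.2 + p.1 + 1 + 1 = p.1 + p.2 + 2 by omega]
  have hlow2 : (∑' p : ℕ × ℕ,
      (((p.2 + p.1 + 1 : ℕ) : ℂ) + 1) ^ 2 * u q (p.2 + p.1 + 1 + 1) * u q (p.1 + 1)) = V02 := by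
    refine tsum_congr fun p => ?_
    rw [show p.2 + p.1 + 1 + 1 = p.1 + p.2 + 2 by omega]
    push_cast
    ring
  have hdiag2 : (∑' j : ℕ, ((j : ℂ) + 1) ^ 2 * u q (j + 1) * u q (j + 1)) = Zs q := by
    rw [Zs]
    exact tsum_congr fun j => by ring
  have e3 : (∑' p : ℕ × ℕ, ((p.1 : ℂ) + 1) ^ 2 * u q (p.1 + 1) * u q (p.2 + 1))
      = V20 + V02 + Zs q := by
    rw [hsplit2, hup2, hlow2, hdiag2]
  have hpt2 : ∀ p : ℕ × ℕ,
      ((p.1 : ℂ) + 1) ^ 2 * u q (p.1 + 1) * u q (p.2 + 1)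
      = ((p.1 : ℂ) + 1) ^ 2 * u q (p.1 + 1) * u q (p.1 + p.2 + 2)
        + ((p.1 : ℂ) + 1) ^ 2 * u q (p.2 + 1) * u q (p.1 + p.2 + 2)
        + ((p.1 : ℂ) + 1) ^ 2 * u q (p.1 + p.2 + 2) := fun p => by
    linear_combination (((p.1 : ℂ) + 1) ^ 2) * u_mul hq p.1 p.2
  have hdec2 : (∑' p : ℕ × ℕ, ((p.1 : ℂ) + 1) ^ 2 * u q (p.1 + 1) * u q (p.2 + 1))
      = (∑' p : ℕ × ℕ, ((p.1 : ℂ) + 1) ^ 2 * u q (p.1 + 1) * u q (p.1 + p.2 + 2))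
        + (∑' p : ℕ × ℕ, ((p.1 : ℂ) + 1) ^ 2 * u q (p.2 + 1) * u q (p.1 + p.2 + 2))
        + (∑' p : ℕ × ℕ, ((p.1 : ℂ) + 1) ^ 2 * u q (p.1 + p.2 + 2)) := by
    rw [tsum_congr hpt2, Summable.tsum_add (s_v20.add s_xs) s_c2, Summable.tsum_add s_v20 s_xs]
  have hxs : (∑' p : ℕ × ℕ, ((p.1 : ℂ) + 1) ^ 2 * u q (p.2 + 1) * u q (p.1 + p.2 + 2))
      = ∑' p : ℕ × ℕ, ((p.2 : ℂ) + 1) ^ 2 * u q (p.1 + 1) * u q (p.1 + p.2 + 2) := by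
    rw [← Equiv.tsum_eq (Equiv.prodComm ℕ ℕ) (fun p : ℕ × ℕ =>
      ((p.2 : ℂ) + 1) ^ 2 * u q (p.1 + 1) * u q (p.1 + p.2 + 2))]
    refine tsum_congr fun p => ?_
    simp only [Equiv.prodComm_apply, Prod.fst_swap, Prod.snd_swap]
    rw [show p.2 + p.1 + 2 = p.1 + p.2 + 2 by omega]
  have hyv : (∑' p : ℕ × ℕ, ((p.2 : ℂ) + 1) ^ 2 * u q (p.1 + 1) * u q (p.1 + p.2 + 2))
      = V02 - (2 * V11 - V20) := by
    rw [hV11, hV20, hV02, ← tsum_mul_left,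
      ← Summable.tsum_sub (s_v11.mul_left 2) s_v20, ← Summable.tsum_sub s_v02 ((s_v11.mul_left 2).sub s_v20)]
    exact tsum_congr fun p => by ring
  have hC2 : (∑' p : ℕ × ℕ, ((p.1 : ℂ) + 1) ^ 2 * u q (p.1 + p.2 + 2))
      = (2 * A q 3 - 3 * A q 2 + A q 1) / 6 := by
    rw [eq_div_iff (by norm_num : (6:ℂ) ≠ 0)]
    linear_combination -C2_eval hq
  have e4 : (∑' p : ℕ × ℕ, ((p.1 : ℂ) + 1) ^ 2 * u q (p.1 + 1) * u q (p.2 + 1))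
      = V20 + (V02 - (2 * V11 - V20)) + (2 * A q 3 - 3 * A q 2 + A q 1) / 6 := by
    rw [hdec2, hxs, hyv, hC2]
  -- Final assembly
  linear_combination (288 : ℂ) * e1 + 288 * e2 - 576 * e3 + 576 * e4


end QW

open Complex Real

/-- The normalized weight-2 Eisenstein series as a `q`-series:
`E₂ = 1 - 24 ∑_{n ≥ 1} σ₁(n) qⁿ`. -/
noncomputable def E₂ (q : ℂ) : ℂ :=
  1 - 24 * ∑' n : ℕ, (ArithmeticFunction.sigma 1 (n + 1) : ℂ) * q ^ (n + 1)

/-- The normalized weight-4 Eisenstein series as a `q`-series: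
`E₄ = 1 + 240 ∑_{n ≥ 1} σ₃(n) qⁿ`. -/
noncomputable def E₄ (q : ℂ) : ℂ :=
  1 + 240 * ∑' n : ℕ, (ArithmeticFunction.sigma 3 (n + 1) : ℂ) * q ^ (n + 1)

/-- The `q`-series identity
`2 (2πi)⁴ ∑_{k ≥ 1} k² qᵏ/(1 - qᵏ)² = (π⁴/9)(E₄(τ) - E₂(τ)²)`
holds for `τ` in the upper half-plane, where `q = e^{2πiτ}`. -/
theorem qseries_identity_weight_four (τ : ℂ) (hτ : 0 < τ.im) :
    2 * (2 * π * Complex.I) ^ 4 *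
        ∑' k : ℕ, ((k + 1 : ℕ) : ℂ) ^ 2 * Complex.exp (2 * π * Complex.I * τ) ^ (k + 1) /
          (1 - Complex.exp (2 * π * Complex.I * τ) ^ (k + 1)) ^ 2 =
      (π : ℂ) ^ 4 / 9 *
        (E₄ (Complex.exp (2 * π * Complex.I * τ)) -
          E₂ (Complex.exp (2 * π * Complex.I * τ)) ^ 2) := by
  set q : ℂ := Complex.exp (2 * π * Complex.I * τ) with hqdef
  have hre : (2 * (π : ℂ) * Complex.I * τ).re = -(2 * π * τ.im) := by
    simp [Complex.mul_re, Complex.mul_im]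
  have hq : ‖q‖ < 1 := by
    rw [hqdef, Complex.norm_exp, hre]
    have hπ := Real.pi_pos
    have : -(2 * π * τ.im) < 0 := by nlinarith
    calc Real.exp (-(2 * π * τ.im)) < Real.exp 0 := Real.exp_lt_exp.2 this
    _ = 1 := Real.exp_zero
  have hS : (∑' k : ℕ, ((k + 1 : ℕ) : ℂ) ^ 2 * q ^ (k + 1) / (1 - q ^ (k + 1)) ^ 2)
      = QW.A q 2 + QW.Zs q := by
    rw [QW.A, QW.Zs, ← Summable.tsum_add (QW.summableA hq 2) (QW.summableZ hq)]
    refine tsum_congr fun k => ?_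
    have h := QW.one_sub_ne hq k
    rw [QW.u]
    push_cast
    field_simp
    ring
  have hI4 : (2 * (π : ℂ) * Complex.I) ^ 4 = 16 * (π : ℂ) ^ 4 := by
    rw [show (2 * (π : ℂ) * Complex.I) ^ 4
      = 16 * (π : ℂ) ^ 4 * (Complex.I ^ 2 * Complex.I ^ 2) by ring, Complex.I_sq]
    ring
  rw [hS, hI4, E₂, E₄, QW.lambert hq 1, QW.lambert hq 3]
  linear_combination ((π : ℂ) ^ 4 / 9) * QW.main_identity hq
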